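/- Let P = I₂ ⊗ |0⟩⟨0| ⊗ I_{d²} be the projector onto the |0⟩ state of the block-encoding register. Then ‖P·ψ₂‖² = ‖c̃‖₂²/(2Δ²) + 1/2, and the normalized projected state P·ψ₂/‖P·ψ₂‖ equals (1/γ)·( e₀ ⊗ e₀ ⊗ ((H̃/Δ) ⊗ I)Φ_d + e₁ ⊗ e₀ ⊗ Φ_d ), where γ = √(‖c̃‖₂²/Δ² + 1); i.e., up to the factored-out block-encoding qubit, the projected state is the pseudo-Choi state of H̃/Δ. -/

import Mathlib

open Matrix Kronecker

/-- The maximally entangled state `Φ_d = (1/√d) ∑ i, e_i ⊗ e_i` on `ℂ^d ⊗ ℂ^d`. -/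
noncomputable def Phi (d : ℕ) : Fin d × Fin d → ℂ :=
  fun p => if p.1 = p.2 then ((1 / Real.sqrt d : ℝ) : ℂ) else 0

lemma kron_mulVec_Phi (d : ℕ) (A : Matrix (Fin d) (Fin d) ℂ) (p : Fin d × Fin d) :
    (A ⊗ₖ (1 : Matrix (Fin d) (Fin d) ℂ)).mulVec (Phi d) p
      = A p.1 p.2 * ((1 / Real.sqrt d : ℝ) : ℂ) := by
  obtain ⟨i, j⟩ := p
  simp only [mulVec, dotProduct, kroneckerMap_apply, Phi, one_apply]
  rw [Finset.sum_eq_single (⟨j, j⟩ : Fin d × Fin d)]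
  · simp
  · rintro ⟨k, l⟩ _ hb
    rcases eq_or_ne j l with rfl | h
    · have hk : k ≠ j := by rintro rfl; exact hb rfl
      rw [if_neg hk]; ring
    · rw [if_neg h]; ring
  · simp

lemma frob_eq (d M : ℕ) (hd : 0 < d)
    (Hm : Fin M → Matrix (Fin d) (Fin d) ℂ)
    (hherm : ∀ m, (Hm m).IsHermitian)
    (hortho : ∀ j k, (Hm j * Hm k).trace / (d : ℂ) = if j = k then 1 else 0)
    (ctil : Fin M → ℂ)
    (Htil : Matrix (Fin d) (Fin d) ℂ) (hHtil : Htil = ∑ m, ctil m • Hm m) :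
    (Htilᴴ * Htil).trace = (d : ℂ) * ∑ m, (Complex.normSq (ctil m) : ℂ) := by
  have hd' : (d : ℂ) ≠ 0 := Nat.cast_ne_zero.mpr hd.ne'
  have htr : ∀ j k, (Hm j * Hm k).trace = (d : ℂ) * (if j = k then 1 else 0) := by
    intro j k
    have h := hortho j k
    field_simp at h
    rw [h]
  subst hHtil
  rw [conjTranspose_sum]
  simp only [conjTranspose_smul, fun m => (hherm m).eq]
  rw [Finset.sum_mul_sum, trace_sum]
  simp only [trace_sum, smul_mul_smul_comm, trace_smul, htr, smul_eq_mul]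
  rw [Finset.sum_comm]
  have : ∀ k : Fin M, ∑ j : Fin M, star (ctil j) * ctil k *
      ((d : ℂ) * if j = k then 1 else 0) = (d : ℂ) * (Complex.normSq (ctil k) : ℂ) := by
    intro k
    rw [Finset.sum_eq_single k]
    · rw [if_pos rfl, Complex.normSq_eq_conj_mul_self, starRingEnd_apply]; ring
    · intro j _ hj; rw [if_neg hj]; ring
    · simp
  rw [Finset.sum_congr rfl fun k _ => this k]
  rw [Finset.mul_sum]

lemma trace_eq_sum_normSq (d : ℕ) (A : Matrix (Fin d) (Fin d) ℂ) :
    (Aᴴ * A).trace = ∑ p : Fin d × Fin d, (Complex.normSq (A p.1 p.2) : ℂ) := by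
  rw [Matrix.trace, Fintype.sum_prod_type]
  simp only [Matrix.diag_apply, Matrix.mul_apply, conjTranspose_apply]
  rw [Finset.sum_comm]
  congr 1; ext i
  congr 1; ext j
  rw [Complex.normSq_eq_conj_mul_self, starRingEnd_apply]

/-- projecting the post-circuit state `ψ₂` onto `|0⟩` of the block-encoding
register gives `‖P·ψ₂‖² = ‖c̃‖₂²/(2Δ²) + 1/2`, and the normalized projected state is the
pseudo-Choi state of `H̃/Δ` (with the block-encoding qubit factored out in `|0⟩`). -/
theorem projected_state_is_pseudoChoi (d M : ℕ) (hd : 0 < d) (hM : 0 < M)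
    (Hm : Fin M → Matrix (Fin d) (Fin d) ℂ)
    (hherm : ∀ m, (Hm m).IsHermitian)
    (hunit : ∀ m, Hm m ∈ Matrix.unitaryGroup (Fin d) ℂ)
    (hortho : ∀ j k, (Hm j * Hm k).trace / (d : ℂ) = if j = k then 1 else 0)
    (ctil : Fin M → ℂ) (Δ : ℝ) (hΔ : 0 < Δ)
    (J : Matrix (Fin d) (Fin d) ℂ)
    (Htil : Matrix (Fin d) (Fin d) ℂ) (hHtil : Htil = ∑ m, ctil m • Hm m)
    (w0 : Fin d × Fin d → ℂ)
    (hw0 : w0 = (((Δ : ℂ)⁻¹ • Htil) ⊗ₖ (1 : Matrix (Fin d) (Fin d) ℂ)).mulVec (Phi d))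
    (ψ₂ : Fin 2 × Fin 2 × (Fin d × Fin d) → ℂ)
    (hψ₂ : ψ₂ = fun q => ((1 / Real.sqrt 2 : ℝ) : ℂ) *
      ((if q.1 = 0 then 1 else 0) * (if q.2.1 = 0 then 1 else 0) * w0 q.2.2
        + (if q.1 = 0 then 1 else 0) * (if q.2.1 = 1 then 1 else 0)
            * ((J ⊗ₖ (1 : Matrix (Fin d) (Fin d) ℂ)).mulVec (Phi d)) q.2.2
        + (if q.1 = 1 then 1 else 0) * (if q.2.1 = 0 then 1 else 0) * Phi d q.2.2))
    (P : Matrix (Fin 2 × Fin 2 × (Fin d × Fin d)) (Fin 2 × Fin 2 × (Fin d × Fin d)) ℂ)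
    (hP : P = (1 : Matrix (Fin 2) (Fin 2) ℂ)
      ⊗ₖ (Matrix.single (0 : Fin 2) (0 : Fin 2) (1 : ℂ)
        ⊗ₖ (1 : Matrix (Fin d × Fin d) (Fin d × Fin d) ℂ))) :
    (∑ q, Complex.normSq (P.mulVec ψ₂ q))
        = (∑ m, Complex.normSq (ctil m)) / (2 * Δ ^ 2) + 1 / 2
    ∧ (fun q => ((Real.sqrt (∑ q', Complex.normSq (P.mulVec ψ₂ q')) : ℝ) : ℂ)⁻¹
          * P.mulVec ψ₂ q)
        = fun q : Fin 2 × Fin 2 × (Fin d × Fin d) =>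
          ((Real.sqrt ((∑ m, Complex.normSq (ctil m)) / Δ ^ 2 + 1) : ℝ) : ℂ)⁻¹
            * ((if q.1 = 0 then 1 else 0) * (if q.2.1 = 0 then 1 else 0) * w0 q.2.2
              + (if q.1 = 1 then 1 else 0) * (if q.2.1 = 0 then 1 else 0) * Phi d q.2.2) := by
  -- abbreviations
  set S : ℝ := ∑ m, Complex.normSq (ctil m) with hS
  have hS0 : 0 ≤ S := Finset.sum_nonneg fun m _ => Complex.normSq_nonneg _
  -- the "projected vector" (before normalization)
  set v : Fin 2 × Fin 2 × (Fin d × Fin d) → ℂ := fun q =>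
      (if q.1 = 0 then 1 else 0) * (if q.2.1 = 0 then 1 else 0) * w0 q.2.2
        + (if q.1 = 1 then 1 else 0) * (if q.2.1 = 0 then 1 else 0) * Phi d q.2.2 with hv
  -- Step 1: P.mulVec ψ₂ = (1/√2) • v
  have hPv : P.mulVec ψ₂ = fun q => ((1 / Real.sqrt 2 : ℝ) : ℂ) * v q := by
    funext q
    obtain ⟨a, b, p⟩ := q
    rw [hP, mulVec]
    rw [show (dotProduct (((1 : Matrix (Fin 2) (Fin 2) ℂ)
      ⊗ₖ (Matrix.single (0 : Fin 2) (0 : Fin 2) (1 : ℂ)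
        ⊗ₖ (1 : Matrix (Fin d × Fin d) (Fin d × Fin d) ℂ))) (a, b, p)) ψ₂)
        = ∑ x : Fin 2 × Fin 2 × (Fin d × Fin d),
          (1 : Matrix (Fin 2) (Fin 2) ℂ) a x.1
            * (Matrix.single (0 : Fin 2) (0 : Fin 2) (1 : ℂ) b x.2.1
              * (1 : Matrix (Fin d × Fin d) (Fin d × Fin d) ℂ) p x.2.2) * ψ₂ x from rfl]
    rw [Finset.sum_eq_single (⟨a, 0, p⟩ : Fin 2 × Fin 2 × (Fin d × Fin d))]
    · rw [hψ₂, hv]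
      simp only [one_apply_eq, Matrix.single_apply_same]
      by_cases hb : b = 0
      · subst hb
        simp [Matrix.single]
      · have h1 : b = 1 := by omega
        subst h1
        simp [Matrix.single]
    · rintro ⟨a', b', p'⟩ _ hne
      by_cases ha : a' = a
      · subst ha
        by_cases hp : p' = p
        · subst hp
          have hb' : b' ≠ 0 := by
            rintro rfl; exact hne rfl
          rw [show Matrix.single (0 : Fin 2) (0 : Fin 2) (1 : ℂ) b b' = 0 by
            simp only [Matrix.single, Matrix.of_apply, ite_eq_right_iff, and_imp]
            intro _ h; exact absurd h.symm hb']
          ring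
        · rw [Matrix.one_apply_ne' hp]
          ring
      · rw [Matrix.one_apply_ne' ha]
        ring
    · simp
  -- Step 2: ∑ normSq (w0 p) = S / Δ^2
  have hsumw0 : ∑ p : Fin d × Fin d, Complex.normSq (w0 p) = S / Δ ^ 2 := by
    have htrace := frob_eq d M hd Hm hherm hortho ctil Htil hHtil
    have hsum : ∑ p : Fin d × Fin d, (Complex.normSq (Htil p.1 p.2) : ℂ)
        = (d : ℂ) * (S : ℂ) := by
      rw [← trace_eq_sum_normSq, htrace, hS]
      push_cast
      ring
    have hsumR : ∑ p : Fin d × Fin d, Complex.normSq (Htil p.1 p.2) = d * S := by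
      have := hsum
      push_cast at this
      exact_mod_cast this
    have hd0 : (d : ℝ) ≠ 0 := Nat.cast_ne_zero.mpr hd.ne'
    calc ∑ p : Fin d × Fin d, Complex.normSq (w0 p)
        = ∑ p : Fin d × Fin d, (Δ ^ 2)⁻¹ * Complex.normSq (Htil p.1 p.2) * (d : ℝ)⁻¹ := by
          apply Finset.sum_congr rfl
          intro p _
          have h1d : (1 / Real.sqrt d) * (1 / Real.sqrt d) = (d : ℝ)⁻¹ := by
            rw [div_mul_div_comm, one_mul, Real.mul_self_sqrt (Nat.cast_nonneg d), one_div]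
          rw [hw0, kron_mulVec_Phi, Complex.normSq_mul, Matrix.smul_apply,
            smul_eq_mul, Complex.normSq_mul, Complex.normSq_inv,
            Complex.normSq_ofReal, Complex.normSq_ofReal, h1d]
          ring
      _ = (Δ ^ 2)⁻¹ * (d : ℝ)⁻¹ * ∑ p : Fin d × Fin d, Complex.normSq (Htil p.1 p.2) := by
          rw [Finset.mul_sum]; apply Finset.sum_congr rfl; intro p _; ring
      _ = S / Δ ^ 2 := by
          rw [hsumR]; field_simp
  -- Step 3: ∑ normSq (Phi d p) = 1
  have hsumPhi : ∑ p : Fin d × Fin d, Complex.normSq (Phi d p) = 1 := by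
    have hd0 : (d : ℝ) ≠ 0 := Nat.cast_ne_zero.mpr hd.ne'
    rw [Fintype.sum_prod_type]
    have : ∀ i : Fin d, ∑ j : Fin d, Complex.normSq (Phi d (i, j)) = (d : ℝ)⁻¹ := by
      intro i
      rw [Finset.sum_eq_single i]
      · have h1d : (1 / Real.sqrt d) * (1 / Real.sqrt d) = (d : ℝ)⁻¹ := by
          rw [div_mul_div_comm, one_mul, Real.mul_self_sqrt (Nat.cast_nonneg d), one_div]
        simp [Phi, Complex.normSq_ofReal, h1d]
      · intro j _ hj
        simp [Phi, Ne.symm hj]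
      · simp
    rw [Finset.sum_congr rfl fun i _ => this i]
    simp [Finset.sum_const, hd0]
  -- Step 4: the total norm squared
  have h2 : Real.sqrt 2 ≠ 0 := by positivity
  have hnormSqHalf : ∀ z : ℂ, Complex.normSq (((1 / Real.sqrt 2 : ℝ) : ℂ) * z)
      = (1 / 2) * Complex.normSq z := by
    intro z
    rw [Complex.normSq_mul, Complex.normSq_ofReal, div_mul_div_comm, one_mul,
      Real.mul_self_sqrt (by norm_num : (0:ℝ) ≤ 2)]
  have hsumv : ∑ q, Complex.normSq (v q)
      = S / Δ ^ 2 + 1 := by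
    rw [Fintype.sum_prod_type]
    rw [Fin.sum_univ_two]
    simp only [Fintype.sum_prod_type, Fin.sum_univ_two]
    simp only [hv]
    norm_num
    have hw := hsumw0
    have hp := hsumPhi
    rw [Fintype.sum_prod_type] at hw hp
    rw [hw, hp]
  have hsumP : ∑ q, Complex.normSq (P.mulVec ψ₂ q) = S / (2 * Δ ^ 2) + 1 / 2 := by
    rw [hPv]
    calc ∑ q, Complex.normSq (((1 / Real.sqrt 2 : ℝ) : ℂ) * v q)
        = ∑ q, (1 / 2) * Complex.normSq (v q) := by
          apply Finset.sum_congr rfl; intro q _; exact hnormSqHalf (v q)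
      _ = (1 / 2) * (S / Δ ^ 2 + 1) := by rw [← Finset.mul_sum, hsumv]
      _ = S / (2 * Δ ^ 2) + 1 / 2 := by field_simp
  refine ⟨hsumP, ?_⟩
  -- Step 5: the normalization identity
  funext q
  rw [hsumP]
  simp only [hPv, hv]
  have hG : (0:ℝ) < S / Δ ^ 2 + 1 := by positivity
  have hscal : ((Real.sqrt (S / (2 * Δ ^ 2) + 1 / 2) : ℝ) : ℂ)⁻¹
      * ((1 / Real.sqrt 2 : ℝ) : ℂ) = ((Real.sqrt (S / Δ ^ 2 + 1) : ℝ) : ℂ)⁻¹ := by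
    have hreal : (Real.sqrt (S / (2 * Δ ^ 2) + 1 / 2))⁻¹ * (1 / Real.sqrt 2)
        = (Real.sqrt (S / Δ ^ 2 + 1))⁻¹ := by
      have hhalf : S / (2 * Δ ^ 2) + 1 / 2 = (S / Δ ^ 2 + 1) / 2 := by
        field_simp
      have hsg : (0:ℝ) < Real.sqrt (S / Δ ^ 2 + 1) := Real.sqrt_pos.mpr hG
      rw [hhalf, Real.sqrt_div hG.le, inv_div, div_mul_div_comm, mul_one,
        mul_comm (Real.sqrt (S / Δ ^ 2 + 1)), ← div_div, div_self h2, one_div]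
    calc ((Real.sqrt (S / (2 * Δ ^ 2) + 1 / 2) : ℝ) : ℂ)⁻¹ * ((1 / Real.sqrt 2 : ℝ) : ℂ)
        = (((Real.sqrt (S / (2 * Δ ^ 2) + 1 / 2))⁻¹ * (1 / Real.sqrt 2) : ℝ) : ℂ) := by
          push_cast; ring
      _ = ((Real.sqrt (S / Δ ^ 2 + 1) : ℝ) : ℂ)⁻¹ := by rw [hreal]; push_cast; ring
  rw [← mul_assoc, hscal]
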